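/- Let N and H be disjoint finite index sets, a ∈ (0,1), and for each i let U_i ∈ ℝ^{n_i×n} with ‖U_i‖ = 1 and b_i ∈ ℝ^{n_i}; let f(x) = Σ_{i∈N} f_i(U_i x) + Σ_{i∈H} ‖U_i x − b_i‖^a. For ε > 0, x ∈ ℝ^n and every d ∈ R(x,ε) := ∩_{i∈C(x,ε)} ker(U_i), one has f_{W(x,ε)}(x+d) ≤ f(x+d) ≤ f_{W(x,ε)}(x+d) + ε^a |H|, where C(x,ε) = {i ∈ H : ‖U_i x − b_i‖ ≤ ε}, W(x,ε) = N ∪ (H∖C(x,ε)) and f_W(y) = Σ_{i∈W} f_i(U_i y) with f_i(U_i y) = ‖U_i y − b_i‖^a for i ∈ H. -/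

import Mathlib

open scoped BigOperators Classical

/-- for `d ∈ R(x,ε)`, the reduced objective `f_{W(x,ε)}` sandwiches `f`:
`f_{W(x,ε)}(x+d) ≤ f(x+d) ≤ f_{W(x,ε)}(x+d) + ε^a |H|`. -/
theorem stmt10 (n : ℕ) {ι : Type*} (N H : Finset ι) (hNH : Disjoint N H) (m : ι → ℕ)
    (U : ∀ i, EuclideanSpace ℝ (Fin n) →L[ℝ] EuclideanSpace ℝ (Fin (m i)))
    (b : ∀ i, EuclideanSpace ℝ (Fin (m i)))
    (φ : ∀ i, EuclideanSpace ℝ (Fin (m i)) → ℝ)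
    (a : ℝ) (ha : a ∈ Set.Ioo (0 : ℝ) 1)
    (hUnorm : ∀ i ∈ N ∪ H, ‖U i‖ = 1)
    (ε : ℝ) (hε : 0 < ε)
    (x d : EuclideanSpace ℝ (Fin n))
    (hd : ∀ i ∈ H, ‖U i x - b i‖ ≤ ε → U i d = 0) :
    (∑ i ∈ N, φ i (U i (x + d))
        + ∑ i ∈ H, (if ε < ‖U i x - b i‖ then ‖U i (x + d) - b i‖ ^ a else 0)
      ≤ ∑ i ∈ N, φ i (U i (x + d)) + ∑ i ∈ H, ‖U i (x + d) - b i‖ ^ a) ∧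
    (∑ i ∈ N, φ i (U i (x + d)) + ∑ i ∈ H, ‖U i (x + d) - b i‖ ^ a
      ≤ (∑ i ∈ N, φ i (U i (x + d))
          + ∑ i ∈ H, (if ε < ‖U i x - b i‖ then ‖U i (x + d) - b i‖ ^ a else 0))
        + ε ^ a * H.card) := by
  have ha0 : 0 < a := ha.1
  constructor
  · gcongr with i hi
    split
    · exact le_rfl
    · positivity
  · rw [add_assoc]
    gcongr ?_ + ?_
    · exact le_rfl
    · have key : ∀ i ∈ H, ‖(U i) (x + d) - b i‖ ^ a ≤
          (if ε < ‖U i x - b i‖ then ‖U i (x + d) - b i‖ ^ a else 0) + ε ^ a := by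
        intro i hi
        split_ifs with h
        · have : (0:ℝ) ≤ ε ^ a := by positivity
          linarith
        · push_neg at h
          have h0 : U i d = 0 := hd i hi h
          rw [map_add, h0, add_zero, zero_add]
          exact Real.rpow_le_rpow (norm_nonneg _) h ha0.le
      calc ∑ i ∈ H, ‖(U i) (x + d) - b i‖ ^ a
          ≤ ∑ i ∈ H, ((if ε < ‖U i x - b i‖ then ‖U i (x + d) - b i‖ ^ a else 0) + ε ^ a) :=
            Finset.sum_le_sum key
        _ = (∑ i ∈ H, (if ε < ‖U i x - b i‖ then ‖U i (x + d) - b i‖ ^ a else 0)) + ε ^ a * H.card := by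
            rw [Finset.sum_add_distrib, Finset.sum_const, nsmul_eq_mul, mul_comm]
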